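/- For a hyperbolic triangle with side lengths d_jk, d_ik, d_ij and opposite angles α_i, α_j, α_k, one has 2·sin((α_i+α_j−α_k)/2)·cosh(d_ij/2) = (sinh²(d_jk/2) + sinh²(d_ik/2) − sinh²(d_ij/2))/(sinh(d_jk/2)·sinh(d_ik/2)). -/

import Mathlib

open Real

private lemma sq_inj_aux (a b : ℝ) (ha : 0 ≤ a) (hb : 0 ≤ b) (h : a ^ 2 = b ^ 2) : a = b := by
  refine le_antisymm ?_ ?_ <;> nlinarith

set_option maxHeartbeats 1000000 in
/-- For a hyperbolic triangle with side lengths `djk, dik, dij` and opposite angles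
`αi, αj, αk`, one has
`2·sin((αi+αj−αk)/2)·cosh(dij/2) = (sinh²(djk/2)+sinh²(dik/2)−sinh²(dij/2))/(sinh(djk/2)·sinh(dik/2))`. -/
theorem stmt2 (djk dik dij αi αj αk : ℝ)
    (hdjk : 0 < djk) (hdik : 0 < dik) (hdij : 0 < dij)
    (htri1 : djk < dik + dij) (htri2 : dik < djk + dij) (htri3 : dij < djk + dik)
    (hαi : αi ∈ Set.Ioo 0 π) (hαj : αj ∈ Set.Ioo 0 π) (hαk : αk ∈ Set.Ioo 0 π)
    (hsum : αi + αj + αk < π)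
    (hcosi : Real.cosh djk = (Real.cos αi + Real.cos αj * Real.cos αk) /
      (Real.sin αj * Real.sin αk))
    (hcosj : Real.cosh dik = (Real.cos αj + Real.cos αk * Real.cos αi) /
      (Real.sin αk * Real.sin αi))
    (hcosk : Real.cosh dij = (Real.cos αk + Real.cos αi * Real.cos αj) /
      (Real.sin αi * Real.sin αj)) :
    2 * Real.sin ((αi + αj - αk) / 2) * Real.cosh (dij / 2) =
      (Real.sinh (djk / 2) ^ 2 + Real.sinh (dik / 2) ^ 2 - Real.sinh (dij / 2) ^ 2) /
        (Real.sinh (djk / 2) * Real.sinh (dik / 2)) := by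
  obtain ⟨hi0, hiπ⟩ := hαi
  obtain ⟨hj0, hjπ⟩ := hαj
  obtain ⟨hk0, hkπ⟩ := hαk
  set p := (αj + αk - αi) / 2 with hp
  set q := (αi + αk - αj) / 2 with hq
  set r := (αi + αj - αk) / 2 with hr
  set s := (αi + αj + αk) / 2 with hs
  have sA : 0 < Real.sin αi := Real.sin_pos_of_pos_of_lt_pi hi0 hiπ
  have sB : 0 < Real.sin αj := Real.sin_pos_of_pos_of_lt_pi hj0 hjπ
  have sC : 0 < Real.sin αk := Real.sin_pos_of_pos_of_lt_pi hk0 hkπ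
  have hcs : 0 < Real.cos s := by
    refine Real.cos_pos_of_mem_Ioo ⟨?_, ?_⟩
    · have := Real.pi_pos
      rw [hs]; nlinarith
    · rw [hs]; nlinarith
  -- trig identities
  have t1 : Real.cos αi + Real.cos αj * Real.cos αk - Real.sin αj * Real.sin αk
      = 2 * Real.cos s * Real.cos p := by
    have h := Real.cos_add_cos αi (αj + αk)
    rw [Real.cos_add, show (αi + (αj + αk)) / 2 = s by rw [hs]; ring,
        show (αi - (αj + αk)) / 2 = -p by rw [hp]; ring, Real.cos_neg] at h
    linear_combination h
  have t2 : Real.cos αj + Real.cos αk * Real.cos αi - Real.sin αk * Real.sin αi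
      = 2 * Real.cos s * Real.cos q := by
    have h := Real.cos_add_cos αj (αk + αi)
    rw [Real.cos_add, show (αj + (αk + αi)) / 2 = s by rw [hs]; ring,
        show (αj - (αk + αi)) / 2 = -q by rw [hq]; ring, Real.cos_neg] at h
    linear_combination h
  have t3 : Real.cos αk + Real.cos αi * Real.cos αj - Real.sin αi * Real.sin αj
      = 2 * Real.cos s * Real.cos r := by
    have h := Real.cos_add_cos αk (αi + αj)
    rw [Real.cos_add, show (αk + (αi + αj)) / 2 = s by rw [hs]; ring,
        show (αk - (αi + αj)) / 2 = -r by rw [hr]; ring, Real.cos_neg] at h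
    linear_combination h
  have t4 : Real.cos αk + Real.cos αi * Real.cos αj + Real.sin αi * Real.sin αj
      = 2 * Real.cos p * Real.cos q := by
    have h := Real.cos_add_cos αk (αi - αj)
    rw [Real.cos_sub, show (αk + (αi - αj)) / 2 = q by rw [hq]; ring,
        show (αk - (αi - αj)) / 2 = p by rw [hp]; ring] at h
    linear_combination h
  have hBC : Real.sin αj * Real.sin αk ≠ 0 := by positivity
  have hCA : Real.sin αk * Real.sin αi ≠ 0 := by positivity
  have hAB : Real.sin αi * Real.sin αj ≠ 0 := by positivity
  -- half-angle formulas
  have e1 : Real.sinh (djk / 2) ^ 2 = Real.cos s * Real.cos p / (Real.sin αj * Real.sin αk) := by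
    have h := Real.cosh_two_mul (djk / 2)
    rw [show 2 * (djk / 2) = djk by ring, Real.cosh_sq, hcosi] at h
    rw [div_eq_iff hBC] at h
    rw [eq_div_iff hBC]
    linear_combination (t1 - h) / 2
  have e2 : Real.sinh (dik / 2) ^ 2 = Real.cos s * Real.cos q / (Real.sin αk * Real.sin αi) := by
    have h := Real.cosh_two_mul (dik / 2)
    rw [show 2 * (dik / 2) = dik by ring, Real.cosh_sq, hcosj] at h
    rw [div_eq_iff hCA] at h
    rw [eq_div_iff hCA]
    linear_combination (t2 - h) / 2
  have e3 : Real.sinh (dij / 2) ^ 2 = Real.cos s * Real.cos r / (Real.sin αi * Real.sin αj) := by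
    have h := Real.cosh_two_mul (dij / 2)
    rw [show 2 * (dij / 2) = dij by ring, Real.cosh_sq, hcosk] at h
    rw [div_eq_iff hAB] at h
    rw [eq_div_iff hAB]
    linear_combination (t3 - h) / 2
  have e4 : Real.cosh (dij / 2) ^ 2 = Real.cos p * Real.cos q / (Real.sin αi * Real.sin αj) := by
    have h := Real.cosh_two_mul (dij / 2)
    rw [show 2 * (dij / 2) = dij by ring, hcosk] at h
    rw [div_eq_iff hAB] at h
    rw [eq_div_iff hAB]
    linear_combination (t4 - h) / 2 + (Real.sin αi * Real.sin αj) / 2 * Real.cosh_sq (dij / 2)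
  -- positivity
  have s1pos : 0 < Real.sinh (djk / 2) := Real.sinh_pos_iff.mpr (by linarith)
  have s2pos : 0 < Real.sinh (dik / 2) := Real.sinh_pos_iff.mpr (by linarith)
  have c3pos : 0 < Real.cosh (dij / 2) := Real.cosh_pos _
  have hcp : 0 < Real.cos p := by
    have h1 : Real.sinh (djk / 2) ^ 2 * (Real.sin αj * Real.sin αk)
        = Real.cos s * Real.cos p := by rw [e1]; field_simp
    nlinarith [mul_pos (pow_pos s1pos 2) (mul_pos sB sC)]
  have hcq : 0 < Real.cos q := by
    have h1 : Real.sinh (dik / 2) ^ 2 * (Real.sin αk * Real.sin αi)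
        = Real.cos s * Real.cos q := by rw [e2]; field_simp
    nlinarith [mul_pos (pow_pos s2pos 2) (mul_pos sC sA)]
  -- product formula
  have eprod : Real.sinh (djk / 2) * Real.sinh (dik / 2)
      = Real.cos s * Real.cosh (dij / 2) / Real.sin αk := by
    apply sq_inj_aux _ _ (mul_pos s1pos s2pos).le
      (div_pos (mul_pos hcs c3pos) sC).le
    rw [mul_pow, e1, e2, div_pow, mul_pow, e4]
    field_simp
  -- key trig identity
  have key : Real.sin αi * Real.cos p + Real.sin αj * Real.cos q - Real.sin αk * Real.cos r
      = 2 * Real.sin r * Real.cos p * Real.cos q := by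
    rw [show αi = q + r by rw [hq, hr]; ring, show αj = p + r by rw [hp, hr]; ring,
        show αk = p + q by rw [hp, hq]; ring, Real.sin_add, Real.sin_add, Real.sin_add]
    ring
  -- finish
  have e4' : Real.cosh (dij / 2) ^ 2 * (Real.sin αi * Real.sin αj)
      = Real.cos p * Real.cos q := by rw [e4]; field_simp
  have hne : Real.cos s * Real.cosh (dij / 2) / Real.sin αk ≠ 0 :=
    ne_of_gt (div_pos (mul_pos hcs c3pos) sC)
  rw [e1, e2, e3, eprod, eq_div_iff hne]
  field_simp
  linear_combination 2 * Real.sin r * e4' - key
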